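/- arXiv:1705.03589 — 3 statements merged into one kernel-verified Lean document; each statement's English description precedes it below -/
import Mathlib

section
/- Let V be a finite set of size n and μ a probability measure on A^V with A finite. If X_1,...,X_n are i.i.d. uniform random variables on [0,1] indexed by an enumeration v_1,...,v_n of V, then (1/n)·H(μ) = (1/n)·Σ_{i=1}^n E[H_μ(σ_{v_i} | {σ_{v_j} : X_j < X_i})], where the expectation is over the random variables X_1,...,X_n. -/
open scoped Classical BigOperators

noncomputable section

/-- Shannon entropy of a finitely supported probability vector (natural log,
with the convention `0 · log 0 = 0`, automatic since `Real.log 0 = 0`). -/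
def shEnt {Ω : Type*} [Fintype Ω] (p : Ω → ℝ) : ℝ :=
  -∑ ω, p ω * Real.log (p ω)

/-- Marginal of a probability vector on `V → A` on the coordinates in `S`. -/
def marg {V A : Type*} [Fintype V] [Fintype A] (μ : (V → A) → ℝ) (S : Finset V) :
    ({x // x ∈ S} → A) → ℝ :=
  fun η => ∑ x : V → A, if (∀ i : S, x i = η i) then μ x else 0

/-- Conditional Shannon entropy `H_μ(σ_v | σ_S)`, via the chain rule
`H(σ_{S ∪ {v}}) - H(σ_S)`. -/
def condEnt {V A : Type*} [Fintype V] [Fintype A] (μ : (V → A) → ℝ) (v : V)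
    (S : Finset V) : ℝ :=
  shEnt (marg μ (insert v S)) - shEnt (marg μ S)


open MeasureTheory

section Aux

variable {V A : Type*} [Fintype V] [Fintype A]

lemma marg_univ (μ : (V → A) → ℝ) (η : {x // x ∈ (Finset.univ : Finset V)} → A) :
    marg μ Finset.univ η = μ (fun v => η ⟨v, Finset.mem_univ v⟩) := by
  unfold marg
  rw [Finset.sum_eq_single (fun v => η ⟨v, Finset.mem_univ v⟩)]
  · simp
  · intro x _ hx
    rw [if_neg]
    intro h
    apply hx
    funext v
    exact h ⟨v, Finset.mem_univ v⟩
  · simp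

lemma shEnt_marg_univ (μ : (V → A) → ℝ) : shEnt (marg μ Finset.univ) = shEnt μ := by
  unfold shEnt
  congr 1
  let E : (V → A) ≃ ({x // x ∈ (Finset.univ : Finset V)} → A) :=
    Equiv.arrowCongr (Equiv.subtypeUnivEquiv (fun v => Finset.mem_univ v)).symm (Equiv.refl A)
  rw [← Equiv.sum_comp E (fun η => marg μ Finset.univ η * Real.log (marg μ Finset.univ η))]
  refine Finset.sum_congr rfl fun x _ => ?_
  rw [marg_univ]
  rfl

lemma shEnt_marg_empty (μ : (V → A) → ℝ) (hsum : ∑ x, μ x = 1) :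
    shEnt (marg μ (∅ : Finset V)) = 0 := by
  unfold shEnt
  have : ∀ η, marg μ (∅ : Finset V) η = 1 := by
    intro η
    unfold marg
    rw [← hsum]
    refine Finset.sum_congr rfl fun x _ => ?_
    rw [if_pos]
    exact fun i => absurd i.2 (Finset.notMem_empty _)
  simp [this]

/-- The random-order chain rule, pointwise for an injective realization `X`. -/
lemma telescope {n : ℕ} (e : Fin n ≃ V) (μ : (V → A) → ℝ) (X : Fin n → ℝ)
    (hX : Function.Injective X) :
    ∑ i : Fin n, condEnt μ (e i) ((Finset.univ.filter (fun j : Fin n => X j < X i)).image e)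
      = shEnt (marg μ (Finset.univ : Finset V)) - shEnt (marg μ (∅ : Finset V)) := by
  set σ := Tuple.sort X with hσ
  have hmono : Monotone (X ∘ σ) := Tuple.monotone_sort X
  have hsm : StrictMono (X ∘ σ) := hmono.strictMono_of_injective (hX.comp σ.injective)
  have hcmp : ∀ (j k : Fin n), X j < X (σ k) ↔ σ.symm j < k := by
    intro j k
    have : X j = (X ∘ σ) (σ.symm j) := by simp
    rw [this]
    exact hsm.lt_iff_lt
  set T : ℕ → Finset (Fin n) := fun m => Finset.univ.filter (fun j => (σ.symm j : ℕ) < m) with hT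
  have hfilter : ∀ k : Fin n,
      Finset.univ.filter (fun j : Fin n => X j < X (σ k)) = T (k : ℕ) := by
    intro k
    ext j
    simp only [hT, Finset.mem_filter, Finset.mem_univ, true_and]
    rw [hcmp j k, Fin.lt_iff_val_lt_val]
  have hins : ∀ k : Fin n, insert (σ k) (T (k : ℕ)) = T ((k : ℕ) + 1) := by
    intro k
    ext j
    simp only [Finset.mem_insert, hT, Finset.mem_filter, Finset.mem_univ, true_and,
      Nat.lt_succ_iff_lt_or_eq]
    constructor
    · rintro (rfl | h)
      · right; simp
      · left; exact h
    · rintro (h | h)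
      · right; exact h
      · left
        have : σ.symm j = k := Fin.ext h
        rw [← this]; simp
  set G : ℕ → ℝ := fun m => shEnt (marg μ ((T m).image e)) with hG
  have hterm : ∀ k : Fin n,
      condEnt μ (e (σ k)) ((Finset.univ.filter (fun j : Fin n => X j < X (σ k))).image e)
        = G ((k : ℕ) + 1) - G (k : ℕ) := by
    intro k
    rw [hfilter k]
    unfold condEnt
    rw [← Finset.image_insert, hins k]
  calc ∑ i : Fin n, condEnt μ (e i) ((Finset.univ.filter (fun j : Fin n => X j < X i)).image e)
      = ∑ k : Fin n, condEnt μ (e (σ k))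
          ((Finset.univ.filter (fun j : Fin n => X j < X (σ k))).image e) :=
        (Equiv.sum_comp σ _).symm
    _ = ∑ k : Fin n, (G ((k : ℕ) + 1) - G (k : ℕ)) := by
        exact Finset.sum_congr rfl fun k _ => hterm k
    _ = ∑ k ∈ Finset.range n, (G (k + 1) - G k) := by
        rw [Fin.sum_univ_eq_sum_range (fun k => G (k + 1) - G k)]
    _ = G n - G 0 := Finset.sum_range_sub G n
    _ = shEnt (marg μ (Finset.univ : Finset V)) - shEnt (marg μ (∅ : Finset V)) := by
        have h1 : T n = Finset.univ := by
          ext j; simp [hT, Fin.is_lt]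
        have h2 : T 0 = ∅ := by
          ext j; simp [hT]
        have h3 : (Finset.univ : Finset (Fin n)).image e = Finset.univ := by
          simp
        show shEnt (marg μ ((T n).image e)) - shEnt (marg μ ((T 0).image e)) = _
        rw [h1, h2, h3, Finset.image_empty]

end Aux

/-- Uniform measure on `[0,1]`. -/
abbrev unifNu : Measure ℝ := volume.restrict (Set.Icc (0:ℝ) 1)

instance : IsProbabilityMeasure unifNu :=
  ⟨by rw [Measure.restrict_apply_univ, Real.volume_Icc]; norm_num⟩

lemma null_noninj (n : ℕ) :
    (Measure.pi fun _ : Fin n => unifNu) {X : Fin n → ℝ | ¬ Function.Injective X} = 0 := by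
  set m := Measure.pi fun _ : Fin n => unifNu with hm
  have hpair : ∀ i j : Fin n, i ≠ j → m {X : Fin n → ℝ | X i = X j} = 0 := by
    intro i j hij
    set p : Fin n → Prop := fun k => k = i with hp
    have MP := measurePreserving_piEquivPiSubtypeProd (α := fun _ : Fin n => ℝ)
      (μ := fun _ : Fin n => unifNu) p
    set E := MeasurableEquiv.piEquivPiSubtypeProd (fun _ : Fin n => ℝ) p with hE
    have hj' : ¬ p j := hij.symm
    set S : Set (({k : Fin n // p k} → ℝ) × ({k : Fin n // ¬ p k} → ℝ)) :=
      {y | y.1 ⟨i, rfl⟩ = y.2 ⟨j, hj'⟩} with hS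
    have hSmeas : MeasurableSet S := by
      apply measurableSet_eq_fun
      · exact (measurable_pi_apply _).comp measurable_fst
      · exact (measurable_pi_apply _).comp measurable_snd
    have hpre : {X : Fin n → ℝ | X i = X j} = E ⁻¹' S := rfl
    rw [hpre, MP.measure_preimage hSmeas.nullMeasurableSet]
    rw [Measure.measure_prod_null hSmeas]
    filter_upwards with a
    have : Prod.mk a ⁻¹' S = {z : {k : Fin n // ¬ p k} → ℝ | z ⟨j, hj'⟩ = a ⟨i, rfl⟩} := by
      ext z; simp [hS, eq_comm]
    rw [this]
    simpa using Measure.pi_hyperplane (fun _ : {k : Fin n // ¬ p k} => unifNu)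
      (⟨j, hj'⟩ : {k : Fin n // ¬ p k}) (a ⟨i, rfl⟩)
  have hsub : {X : Fin n → ℝ | ¬ Function.Injective X}
      ⊆ ⋃ i : Fin n, ⋃ j : Fin n, ⋃ _ : i ≠ j, {X : Fin n → ℝ | X i = X j} := by
    intro X hX
    simp only [Set.mem_setOf_eq, Function.Injective, not_forall] at hX
    obtain ⟨i, j, h1, h2⟩ := hX
    exact Set.mem_iUnion.2 ⟨i, Set.mem_iUnion.2 ⟨j, Set.mem_iUnion.2 ⟨h2, h1⟩⟩⟩
  refine measure_mono_null hsub ?_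
  refine measure_iUnion_null fun i => measure_iUnion_null fun j => measure_iUnion_null fun h => ?_
  exact hpair i j h

lemma meas_filter_set (n : ℕ) (i : Fin n) (T : Finset (Fin n)) :
    MeasurableSet {X : Fin n → ℝ | Finset.univ.filter (fun j : Fin n => X j < X i) = T} := by
  have : {X : Fin n → ℝ | Finset.univ.filter (fun j : Fin n => X j < X i) = T}
      = ⋂ j : Fin n, {X : Fin n → ℝ | X j < X i ↔ j ∈ T} := by
    ext X
    simp only [Set.mem_setOf_eq, Set.mem_iInter, Finset.ext_iff, Finset.mem_filter,
      Finset.mem_univ, true_and]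
  rw [this]
  refine MeasurableSet.iInter fun j => ?_
  by_cases hj : j ∈ T
  · have : {X : Fin n → ℝ | X j < X i ↔ j ∈ T} = {X : Fin n → ℝ | X j < X i} := by
      ext X; simp [hj]
    rw [this]
    exact measurableSet_lt (measurable_pi_apply j) (measurable_pi_apply i)
  · have : {X : Fin n → ℝ | X j < X i ↔ j ∈ T} = {X : Fin n → ℝ | X j < X i}ᶜ := by
      ext X; simp [hj]
    rw [this]
    exact (measurableSet_lt (measurable_pi_apply j) (measurable_pi_apply i)).compl

lemma integrable_f (n : ℕ) (i : Fin n) (g : Finset (Fin n) → ℝ) :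
    Integrable (fun X : Fin n → ℝ => g (Finset.univ.filter (fun j : Fin n => X j < X i)))
      (Measure.pi fun _ : Fin n => unifNu) := by
  have heq : (fun X : Fin n → ℝ => g (Finset.univ.filter (fun j : Fin n => X j < X i)))
      = fun X => ∑ T : Finset (Fin n),
          Set.indicator {X : Fin n → ℝ | Finset.univ.filter (fun j : Fin n => X j < X i) = T}
            (fun _ => g T) X := by
    funext X
    rw [Finset.sum_eq_single (Finset.univ.filter (fun j : Fin n => X j < X i))]
    · rw [Set.indicator_of_mem (by simp)]
    · intro T _ hT
      exact Set.indicator_of_notMem (by simpa [eq_comm] using hT) _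
    · simp
  rw [heq]
  refine integrable_finset_sum _ fun T _ => ?_
  exact (integrable_const (g T)).indicator (meas_filter_set n i T)

/-- random-order chain rule.  If `X_1, …, X_n` are i.i.d. uniform
on `[0,1]`, then `(1/n)·H(μ) = (1/n)·Σ_i E[H_μ(σ_{v_i} | {σ_{v_j} : X_j < X_i})]`. -/
theorem random_order_chain_rule {A V : Type*} [Fintype A] [Nonempty A] [Fintype V]
    {n : ℕ} (hn : 0 < n) (e : Fin n ≃ V) (μ : (V → A) → ℝ)
    (hpos : ∀ x, 0 ≤ μ x) (hsum : ∑ x, μ x = 1) :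
    (1 / (n : ℝ)) * shEnt μ =
      (1 / (n : ℝ)) * ∑ i : Fin n,
        ∫ X : Fin n → ℝ,
          condEnt μ (e i) ((Finset.univ.filter (fun j : Fin n => X j < X i)).image e)
          ∂(Measure.pi fun _ : Fin n => volume.restrict (Set.Icc (0:ℝ) 1)) := by
  congr 1
  have hint : ∀ i : Fin n, Integrable
      (fun X : Fin n → ℝ =>
        condEnt μ (e i) ((Finset.univ.filter (fun j : Fin n => X j < X i)).image e))
      (Measure.pi fun _ : Fin n => unifNu) :=
    fun i => integrable_f n i (fun T => condEnt μ (e i) (T.image e))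
  rw [← integral_finset_sum Finset.univ (fun i _ => hint i)]
  have hae : ∀ᵐ X ∂(Measure.pi fun _ : Fin n => unifNu),
      (∑ i : Fin n, condEnt μ (e i)
        ((Finset.univ.filter (fun j : Fin n => X j < X i)).image e)) = shEnt μ := by
    have hinj : ∀ᵐ X ∂(Measure.pi fun _ : Fin n => unifNu), Function.Injective X :=
      ae_iff.2 (null_noninj n)
    filter_upwards [hinj] with X hX
    rw [telescope e μ X hX, shEnt_marg_univ, shEnt_marg_empty μ hsum, sub_zero]
  rw [integral_congr_ae hae, integral_const]
  simp
end
end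

section
/- Let μ be a probability measure on A^V with A, V finite, let v ∈ V, B ⊆ V with v ∈ B, S ⊆ V \ {v}, S_1 = S ∩ B, and fix a ∈ A and η ∈ A^V with μ(σ_S = η_S) > 0. Suppose that for all pairs of configurations τ, τ' on B^c with positive conditional probability given σ_{S_1} = η_{S_1}, we have |μ(σ_v = a | σ_{S_1} = η_{S_1}, σ_{B^c} = τ) − μ(σ_v = a | σ_{S_1} = η_{S_1}, σ_{B^c} = τ')| ≤ ε. Then |μ(σ_v = a | σ_S = η_S) − μ(σ_v = a | σ_{S_1} = η_{S_1})| ≤ ε. -/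
open scoped Classical BigOperators

noncomputable section

/-- Probability of an event under a probability vector on `V → A`. -/
def prEv {V A : Type*} [Fintype V] [Fintype A] (μ : (V → A) → ℝ)
    (E : Set (V → A)) : ℝ :=
  ∑ x ∈ Finset.univ.filter (fun x => x ∈ E), μ x

/-- Elementary conditional probability `μ(E | F)` (junk value `0` if
`μ(F) = 0`). -/
def cprEv {V A : Type*} [Fintype V] [Fintype A] (μ : (V → A) → ℝ)
    (E F : Set (V → A)) : ℝ :=
  prEv μ (E ∩ F) / prEv μ F


lemma avg_lemma {ι : Type*} (R₁ R₂ : Finset ι) (p e : ι → ℝ) (ε : ℝ)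
    (he0 : ∀ τ, 0 ≤ e τ) (hep : ∀ τ, e τ ≤ p τ)
    (hP₁ : 0 < ∑ τ ∈ R₁, p τ) (hP₂ : 0 < ∑ τ ∈ R₂, p τ)
    (h : ∀ τ ∈ R₁, ∀ τ' ∈ R₂, 0 < p τ → 0 < p τ' →
      |e τ / p τ - e τ' / p τ'| ≤ ε) :
    |(∑ τ ∈ R₁, e τ) / (∑ τ ∈ R₁, p τ) - (∑ τ ∈ R₂, e τ) / (∑ τ ∈ R₂, p τ)| ≤ ε := by
  set P₁ := ∑ τ ∈ R₁, p τ
  set P₂ := ∑ τ ∈ R₂, p τ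
  set E₁ := ∑ τ ∈ R₁, e τ
  set E₂ := ∑ τ ∈ R₂, e τ
  have key : ∀ τ ∈ R₁, ∀ τ' ∈ R₂, |e τ * p τ' - e τ' * p τ| ≤ ε * (p τ * p τ') := by
    intro τ hτ τ' hτ'
    rcases lt_or_ge 0 (p τ) with hpτ | hpτ
    · rcases lt_or_ge 0 (p τ') with hpτ' | hpτ'
      · have := h τ hτ τ' hτ' hpτ hpτ'
        have hne : p τ ≠ 0 := ne_of_gt hpτ
        have hne' : p τ' ≠ 0 := ne_of_gt hpτ'
        have hid : e τ * p τ' - e τ' * p τ = (p τ * p τ') * (e τ / p τ - e τ' / p τ') := by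
          field_simp
        rw [hid, abs_mul, abs_of_pos (mul_pos hpτ hpτ')]
        calc p τ * p τ' * |e τ / p τ - e τ' / p τ'| ≤ p τ * p τ' * ε :=
              mul_le_mul_of_nonneg_left this (le_of_lt (mul_pos hpτ hpτ'))
          _ = ε * (p τ * p τ') := by ring
      · have hp0 : p τ' = 0 := le_antisymm hpτ' (le_trans (he0 τ') (hep τ'))
        have he0' : e τ' = 0 := le_antisymm (hp0 ▸ hep τ') (he0 τ')
        simp [hp0, he0']
    · have hp0 : p τ = 0 := le_antisymm hpτ (le_trans (he0 τ) (hep τ))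
      have he0' : e τ = 0 := le_antisymm (hp0 ▸ hep τ) (he0 τ)
      simp [hp0, he0']
  have hnum : |E₁ * P₂ - E₂ * P₁| ≤ ε * (P₁ * P₂) := by
    have hinner : ∀ τ, ∑ τ' ∈ R₂, (e τ * p τ' - e τ' * p τ) = e τ * P₂ - E₂ * p τ := by
      intro τ
      rw [Finset.sum_sub_distrib, ← Finset.mul_sum, ← Finset.sum_mul]
    have hexp : E₁ * P₂ - E₂ * P₁ = ∑ τ ∈ R₁, ∑ τ' ∈ R₂, (e τ * p τ' - e τ' * p τ) := by
      simp_rw [hinner]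
      rw [Finset.sum_sub_distrib, ← Finset.sum_mul, ← Finset.mul_sum]
    rw [hexp]
    calc |∑ τ ∈ R₁, ∑ τ' ∈ R₂, (e τ * p τ' - e τ' * p τ)|
        ≤ ∑ τ ∈ R₁, ∑ τ' ∈ R₂, |e τ * p τ' - e τ' * p τ| := by
          refine (Finset.abs_sum_le_sum_abs _ _).trans ?_
          exact Finset.sum_le_sum fun τ hτ => Finset.abs_sum_le_sum_abs _ _
      _ ≤ ∑ τ ∈ R₁, ∑ τ' ∈ R₂, ε * (p τ * p τ') := by
          exact Finset.sum_le_sum fun τ hτ => Finset.sum_le_sum fun τ' hτ' => key τ hτ τ' hτ'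
      _ = ε * (P₁ * P₂) := by
          simp_rw [← mul_assoc, ← Finset.mul_sum, ← Finset.sum_mul, ← Finset.mul_sum]
          rfl
  have hdiff : E₁ / P₁ - E₂ / P₂ = (E₁ * P₂ - E₂ * P₁) / (P₁ * P₂) := by
    field_simp
  rw [hdiff, abs_div, abs_of_pos (mul_pos hP₁ hP₂)]
  rw [div_le_iff₀ (mul_pos hP₁ hP₂)]
  linarith [hnum]

lemma prEv_mono {V A : Type*} [Fintype V] [Fintype A] (μ : (V → A) → ℝ)
    (hpos : ∀ x, 0 ≤ μ x) {E F : Set (V → A)} (h : E ⊆ F) :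
    prEv μ E ≤ prEv μ F := by
  unfold prEv
  apply Finset.sum_le_sum_of_subset_of_nonneg
  · intro x hx
    simp only [Finset.mem_filter, Finset.mem_univ, true_and] at *
    exact h hx
  · intro x _ _
    exact hpos x

lemma prEv_nonneg {V A : Type*} [Fintype V] [Fintype A] (μ : (V → A) → ℝ)
    (hpos : ∀ x, 0 ≤ μ x) (E : Set (V → A)) : 0 ≤ prEv μ E :=
  Finset.sum_nonneg fun x _ => hpos x

lemma prEv_empty {V A : Type*} [Fintype V] [Fintype A] (μ : (V → A) → ℝ) :
    prEv μ (∅ : Set (V → A)) = 0 := by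
  simp [prEv]

/-- if the conditional probability of `σ_v = a` given
`σ_{S₁} = η_{S₁}` together with any admissible configuration on `B^c` varies by
at most `ε` as the configuration on `B^c` varies, then conditioning on all of
`σ_S = η_S` and conditioning only on `σ_{S₁} = η_{S₁}` give probabilities for
`σ_v = a` within `ε` of each other. -/
theorem conditioning_localization {A V : Type*} [Fintype A] [Nonempty A]
    [Fintype V] (μ : (V → A) → ℝ) (hpos : ∀ x, 0 ≤ μ x) (hsum : ∑ x, μ x = 1)
    (v : V) (B : Finset V) (hvB : v ∈ B) (S : Finset V) (hvS : v ∉ S)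
    (a : A) (η : V → A) (ε : ℝ) (hε : 0 ≤ ε)
    (hS : 0 < prEv μ {x | ∀ i ∈ S, x i = η i})
    (hyp : ∀ τ τ' : V → A,
      0 < cprEv μ {x | ∀ i ∉ B, x i = τ i} {x | ∀ i ∈ S ∩ B, x i = η i} →
      0 < cprEv μ {x | ∀ i ∉ B, x i = τ' i} {x | ∀ i ∈ S ∩ B, x i = η i} →
      |cprEv μ {x | x v = a}
          ({x | ∀ i ∈ S ∩ B, x i = η i} ∩ {x | ∀ i ∉ B, x i = τ i}) -
        cprEv μ {x | x v = a}
          ({x | ∀ i ∈ S ∩ B, x i = η i} ∩ {x | ∀ i ∉ B, x i = τ' i})| ≤ ε) :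
    |cprEv μ {x | x v = a} {x | ∀ i ∈ S, x i = η i} -
      cprEv μ {x | x v = a} {x | ∀ i ∈ S ∩ B, x i = η i}| ≤ ε := by
  classical
  obtain ⟨d⟩ := ‹Nonempty A›
  set G : Set (V → A) := {x | ∀ i ∈ S, x i = η i} with hG
  set F₁ : Set (V → A) := {x | ∀ i ∈ S ∩ B, x i = η i} with hF₁
  set Ev : Set (V → A) := {x | x v = a} with hEv
  set T : (V → A) → Set (V → A) := fun τ => {x | ∀ i ∉ B, x i = τ i} with hT
  set c : (V → A) → (V → A) := fun x i => if i ∈ B then d else x i with hc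
  set R : Finset (V → A) := Finset.univ.image c with hR
  -- membership in a cell, for representatives
  have hmemT : ∀ τ ∈ R, ∀ x : V → A, x ∈ T τ ↔ c x = τ := by
    intro τ hτ x
    rw [hR] at hτ
    obtain ⟨y, -, rfl⟩ := Finset.mem_image.mp hτ
    constructor
    · intro hx
      funext i
      by_cases hi : i ∈ B
      · simp [hc, hi]
      · have := hx i hi
        simp only [hc, hi, if_neg, ite_false] at this ⊢
        exact this
    · intro hx i hi
      have := congrFun hx i
      simpa [hc, hi] using this
  -- decomposition of any event over the cells
  have hdecomp : ∀ W : Set (V → A), prEv μ W = ∑ τ ∈ R, prEv μ (W ∩ T τ) := by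
    intro W
    have h1 : ∀ τ ∈ R,
        prEv μ (W ∩ T τ) =
          ∑ x ∈ (Finset.univ.filter (fun x => x ∈ W)).filter (fun x => c x = τ), μ x := by
      intro τ hτ
      unfold prEv
      rw [Finset.filter_filter, Finset.sum_filter, Finset.sum_filter]
      refine Finset.sum_congr rfl fun x _ => ?_
      have hx : (x ∈ W ∩ T τ) = (x ∈ W ∧ c x = τ) := by
        refine propext ?_
        simp only [Set.mem_inter_iff]
        exact and_congr_right fun _ => hmemT τ hτ x
      simp only [hx]
    rw [Finset.sum_congr rfl h1]
    rw [Finset.sum_fiberwise_of_maps_to (g := c) (fun x _ => Finset.mem_image_of_mem c (Finset.mem_univ x))]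
    rfl
  -- goodness
  set good : (V → A) → Prop := fun τ => ∀ i ∈ S, i ∉ B → τ i = η i with hgooddef
  set R' : Finset (V → A) := R.filter good with hR'
  -- cells and the event G
  have hGcell : ∀ τ, good τ → G ∩ T τ = F₁ ∩ T τ := by
    intro τ hτ
    ext x
    simp only [Set.mem_inter_iff, hG, hF₁, hT, Set.mem_setOf_eq]
    constructor
    · rintro ⟨hx, hxt⟩
      exact ⟨fun i hi => hx i (Finset.mem_inter.mp hi).1, hxt⟩
    · rintro ⟨hx, hxt⟩
      refine ⟨fun i hi => ?_, hxt⟩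
      by_cases hiB : i ∈ B
      · exact hx i (Finset.mem_inter.mpr ⟨hi, hiB⟩)
      · rw [hxt i hiB]; exact hτ i hi hiB
  have hGbad : ∀ τ, ¬ good τ → G ∩ T τ = ∅ := by
    intro τ hτ
    ext x
    simp only [Set.mem_inter_iff, hG, hT, Set.mem_setOf_eq, Set.mem_empty_iff_false,
      iff_false, not_and]
    intro hx hxt
    exact hτ (fun i hi hiB => by rw [← hxt i hiB]; exact hx i hi)
  -- the weights and numerators
  set p : (V → A) → ℝ := fun τ => prEv μ (F₁ ∩ T τ) with hp
  set e : (V → A) → ℝ := fun τ => prEv μ (Ev ∩ (F₁ ∩ T τ)) with he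
  have he0 : ∀ τ, 0 ≤ e τ := fun τ => prEv_nonneg μ hpos _
  have hep : ∀ τ, e τ ≤ p τ := fun τ =>
    prEv_mono μ hpos (Set.inter_subset_right)
  -- sums over cells
  have hsumF₁ : prEv μ F₁ = ∑ τ ∈ R, p τ := hdecomp F₁
  have hsumEF₁ : prEv μ (Ev ∩ F₁) = ∑ τ ∈ R, e τ := by
    rw [hdecomp (Ev ∩ F₁)]
    exact Finset.sum_congr rfl fun τ _ => by rw [he, Set.inter_assoc]
  have hsumG : prEv μ G = ∑ τ ∈ R', p τ := by
    rw [hdecomp G, hR', Finset.sum_filter]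
    refine Finset.sum_congr rfl fun τ _ => ?_
    by_cases hgτ : good τ
    · rw [if_pos hgτ, hGcell τ hgτ]
    · rw [if_neg hgτ, hGbad τ hgτ, prEv_empty]
  have hsumEG : prEv μ (Ev ∩ G) = ∑ τ ∈ R', e τ := by
    rw [hdecomp (Ev ∩ G), hR', Finset.sum_filter]
    refine Finset.sum_congr rfl fun τ _ => ?_
    by_cases hgτ : good τ
    · rw [if_pos hgτ, Set.inter_assoc, hGcell τ hgτ, he]
    · rw [if_neg hgτ, Set.inter_assoc, hGbad τ hgτ, Set.inter_empty, prEv_empty]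
  -- positivity
  have hGF₁ : G ⊆ F₁ := fun x hx i hi => hx i (Finset.mem_inter.mp hi).1
  have hF₁pos : 0 < prEv μ F₁ := lt_of_lt_of_le hS (prEv_mono μ hpos hGF₁)
  have hP₁ : 0 < ∑ τ ∈ R', p τ := hsumG ▸ hS
  have hP₂ : 0 < ∑ τ ∈ R, p τ := hsumF₁ ▸ hF₁pos
  -- rewrite the goal
  have hgoal1 : cprEv μ Ev G = (∑ τ ∈ R', e τ) / (∑ τ ∈ R', p τ) := by
    rw [cprEv, hsumEG, hsumG]
  have hgoal2 : cprEv μ Ev F₁ = (∑ τ ∈ R, e τ) / (∑ τ ∈ R, p τ) := by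
    rw [cprEv, hsumEF₁, hsumF₁]
  rw [hgoal1, hgoal2]
  -- apply the averaging lemma
  apply avg_lemma R' R p e ε he0 hep hP₁ hP₂
  intro τ hτ τ' hτ' hpτ hpτ'
  have hbridge : ∀ σ : V → A, 0 < p σ →
      0 < cprEv μ {x | ∀ i ∉ B, x i = σ i} {x | ∀ i ∈ S ∩ B, x i = η i} := by
    intro σ hσ
    rw [show ({x | ∀ i ∉ B, x i = σ i} : Set (V → A)) = T σ from rfl]
    unfold cprEv
    apply div_pos _ hF₁pos
    rwa [Set.inter_comm]
  have := hyp τ τ' (hbridge τ hpτ) (hbridge τ' hpτ')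
  exact this
end
end

section
/- Dobrushin-type contraction for the Potts model on T_d: let A = {0,...,q}, μ the Gibbs specification for the Potts interaction Φ(σ_e) = β·1{σ_u = σ_v} on edges plus arbitrary finite self-interactions Ψ on vertices, and define the Dobrushin coefficients ρ_{i,j} as half the sup of total variation distances between single-site conditional distributions at v_j given configurations differing only at v_i. If α := sup_j Σ_{i≠j} ρ_{i,j} < 1, then for every r ≥ 1, a ∈ A, and all boundary conditions η, ξ on T_d(r)^c: |μ_{Φ+Ψ, T_d(r), η}(σ_φ = a) − μ_{Φ+Ψ, T_d(r), ξ}(σ_φ = a)| ≤ α^{r−1}. -/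
open scoped Classical BigOperators

noncomputable section

variable {Γ : Type*}

/-- Single-site conditional distribution of the Potts model (with inverse
temperature `β` and self-interactions `Ψ`) at the vertex `v`, given the
configuration `η` on the rest of the (locally finite) graph with neighbour
map `nbr`. -/
def pottsSiteP (q : ℕ) (β : ℝ) (Ψ : Γ → Fin (q+1) → ℝ) (nbr : Γ → Finset Γ)
    (v : Γ) (η : Γ → Fin (q+1)) (a : Fin (q+1)) : ℝ :=
  Real.exp (β * ∑ u ∈ nbr v, (if η u = a then (1:ℝ) else 0) + Ψ v a) /
    ∑ a' : Fin (q+1),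
      Real.exp (β * ∑ u ∈ nbr v, (if η u = a' then (1:ℝ) else 0) + Ψ v a')

/-- Dobrushin influence coefficient `ρ_{i,j}`: half the supremum of the total
variation distances between the single-site conditional distributions at `j`
over pairs of configurations differing only at `i`. -/
def pottsRho (q : ℕ) (β : ℝ) (Ψ : Γ → Fin (q+1) → ℝ) (nbr : Γ → Finset Γ)
    (i j : Γ) : ℝ :=
  (1/2) * sSup {t : ℝ | ∃ η η' : Γ → Fin (q+1), (∀ w, w ≠ i → η w = η' w) ∧
    t = ∑ a, |pottsSiteP q β Ψ nbr j η a - pottsSiteP q β Ψ nbr j η' a|}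

/-- Finite-volume Potts Gibbs weight on the ball `Br` with boundary condition
`η` (interior edges counted once via the factor `1/2`, boundary edges once). -/
def pottsBallWeight (q : ℕ) (β : ℝ) (Ψ : Γ → Fin (q+1) → ℝ)
    (nbr : Γ → Finset Γ) (Br : Finset Γ) (η : Γ → Fin (q+1))
    (ξ : {v // v ∈ Br} → Fin (q+1)) : ℝ :=
  let c : Γ → Fin (q+1) := fun w => if h : w ∈ Br then ξ ⟨w, h⟩ else η w
  Real.exp (β * ∑ v ∈ Br.attach, ∑ u ∈ nbr (v : Γ),
      (if u ∈ Br then (1/2 : ℝ) else 1) * (if c u = c (v : Γ) then 1 else 0)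
    + ∑ v ∈ Br.attach, Ψ (v : Γ) (c (v : Γ)))

/-- `μ_{Φ+Ψ, T_d(r), η}(σ_φ = a)` for the Potts model on the ball `Br`. -/
def pottsBallProb (q : ℕ) (β : ℝ) (Ψ : Γ → Fin (q+1) → ℝ)
    (nbr : Γ → Finset Γ) (Br : Finset Γ) (φ : Γ) (hφ : φ ∈ Br)
    (η : Γ → Fin (q+1)) (a : Fin (q+1)) : ℝ :=
  (∑ ξ ∈ Finset.univ.filter
      (fun ξ : {v // v ∈ Br} → Fin (q+1) => ξ ⟨φ, hφ⟩ = a),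
      pottsBallWeight q β Ψ nbr Br η ξ) /
  ∑ ξ : {v // v ∈ Br} → Fin (q+1), pottsBallWeight q β Ψ nbr Br η ξ

namespace PottsAux

variable (q : ℕ) (β : ℝ) (Ψ : Γ → Fin (q+1) → ℝ) (nbr : Γ → Finset Γ)

/-- local energy at site `v` -/
def F (v : Γ) (c : Γ → Fin (q+1)) (b : Fin (q+1)) : ℝ :=
  β * ∑ u ∈ nbr v, (if c u = b then (1:ℝ) else 0) + Ψ v b

lemma siteP_eq (v : Γ) (c : Γ → Fin (q+1)) (b : Fin (q+1)) :
    pottsSiteP q β Ψ nbr v c b =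
      Real.exp (F q β Ψ nbr v c b) / ∑ b', Real.exp (F q β Ψ nbr v c b') := rfl

lemma Zpos (v : Γ) (c : Γ → Fin (q+1)) :
    0 < ∑ b', Real.exp (F q β Ψ nbr v c b') :=
  Finset.sum_pos (fun _ _ => Real.exp_pos _) ⟨0, Finset.mem_univ _⟩

lemma siteP_nonneg (v : Γ) (c : Γ → Fin (q+1)) (b : Fin (q+1)) :
    0 ≤ pottsSiteP q β Ψ nbr v c b := by
  rw [siteP_eq]
  exact div_nonneg (Real.exp_pos _).le (Zpos q β Ψ nbr v c).le

lemma siteP_sum (v : Γ) (c : Γ → Fin (q+1)) :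
    ∑ b, pottsSiteP q β Ψ nbr v c b = 1 := by
  simp only [siteP_eq]
  rw [← Finset.sum_div, div_self (Zpos q β Ψ nbr v c).ne']

lemma F_local {v : Γ} {c c' : Γ → Fin (q+1)} (h : ∀ u ∈ nbr v, c u = c' u)
    (b : Fin (q+1)) : F q β Ψ nbr v c b = F q β Ψ nbr v c' b := by
  unfold F
  congr 1
  congr 1
  exact Finset.sum_congr rfl fun u hu => by rw [h u hu]

lemma siteP_local {v : Γ} {c c' : Γ → Fin (q+1)} (h : ∀ u ∈ nbr v, c u = c' u)
    (b : Fin (q+1)) : pottsSiteP q β Ψ nbr v c b = pottsSiteP q β Ψ nbr v c' b := by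
  simp only [siteP_eq]
  rw [F_local q β Ψ nbr h]
  congr 1
  exact Finset.sum_congr rfl fun b' _ => by rw [F_local q β Ψ nbr h]

/-- the set appearing in `pottsRho` -/
def rhoSet (i j : Γ) : Set ℝ :=
  {t : ℝ | ∃ η η' : Γ → Fin (q+1), (∀ w, w ≠ i → η w = η' w) ∧
    t = ∑ a, |pottsSiteP q β Ψ nbr j η a - pottsSiteP q β Ψ nbr j η' a|}

lemma rho_eq (i j : Γ) : pottsRho q β Ψ nbr i j = (1/2) * sSup (rhoSet q β Ψ nbr i j) := rfl

lemma rhoSet_zero_mem (i j : Γ) : (0:ℝ) ∈ rhoSet q β Ψ nbr i j :=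
  ⟨fun _ => 0, fun _ => 0, fun _ _ => rfl, by simp⟩

lemma rhoSet_le_two {i j : Γ} {t : ℝ} (ht : t ∈ rhoSet q β Ψ nbr i j) : t ≤ 2 := by
  obtain ⟨η, η', -, rfl⟩ := ht
  calc ∑ a, |pottsSiteP q β Ψ nbr j η a - pottsSiteP q β Ψ nbr j η' a|
      ≤ ∑ a, (pottsSiteP q β Ψ nbr j η a + pottsSiteP q β Ψ nbr j η' a) := by
        refine Finset.sum_le_sum fun a _ => ?_
        have h1 := siteP_nonneg q β Ψ nbr j η a
        have h2 := siteP_nonneg q β Ψ nbr j η' a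
        rw [abs_sub_comm]
        refine (abs_sub _ _).trans ?_
        rw [abs_of_nonneg h2, abs_of_nonneg h1]; linarith
    _ = 2 := by
        rw [Finset.sum_add_distrib, siteP_sum, siteP_sum]; norm_num

lemma rhoSet_bdd (i j : Γ) : BddAbove (rhoSet q β Ψ nbr i j) :=
  ⟨2, fun _ ht => rhoSet_le_two q β Ψ nbr ht⟩

lemma rho_nonneg (i j : Γ) : 0 ≤ pottsRho q β Ψ nbr i j := by
  rw [rho_eq]
  have := le_csSup (rhoSet_bdd q β Ψ nbr i j) (rhoSet_zero_mem q β Ψ nbr i j)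
  linarith

lemma tv_le_rho {i j : Γ} {η η' : Γ → Fin (q+1)} (h : ∀ w, w ≠ i → η w = η' w) :
    ∑ a, |pottsSiteP q β Ψ nbr j η a - pottsSiteP q β Ψ nbr j η' a|
      ≤ 2 * pottsRho q β Ψ nbr i j := by
  rw [rho_eq]
  have := le_csSup (rhoSet_bdd q β Ψ nbr i j) (⟨η, η', h, rfl⟩ : _ ∈ rhoSet q β Ψ nbr i j)
  linarith

lemma rho_eq_zero (hirr : ∀ v : Γ, v ∉ nbr v) {i j : Γ} (hij : i ∉ nbr j) :
    pottsRho q β Ψ nbr i j = 0 := by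
  rw [rho_eq]
  have h1 : sSup (rhoSet q β Ψ nbr i j) ≤ 0 := by
    refine csSup_le ⟨0, rhoSet_zero_mem q β Ψ nbr i j⟩ ?_
    rintro t ⟨η, η', hagree, rfl⟩
    have : ∀ a, pottsSiteP q β Ψ nbr j η a = pottsSiteP q β Ψ nbr j η' a := by
      intro a
      refine siteP_local q β Ψ nbr (fun u hu => hagree u ?_) a
      rintro rfl; exact hij hu
    simp [this]
  have h2 : (0:ℝ) ≤ sSup (rhoSet q β Ψ nbr i j) :=
    le_csSup (rhoSet_bdd q β Ψ nbr i j) (rhoSet_zero_mem q β Ψ nbr i j)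
  linarith

end PottsAux
namespace PottsAux

variable (q : ℕ) (β : ℝ) (Ψ : Γ → Fin (q+1) → ℝ) (nbr : Γ → Finset Γ)

/-- single-site resampling operator -/
def tau (v : Γ) (g : (Γ → Fin (q+1)) → ℝ) : (Γ → Fin (q+1)) → ℝ :=
  fun σ => ∑ b, pottsSiteP q β Ψ nbr v σ b * g (Function.update σ v b)

/-- oscillation bound -/
def OscB (g : (Γ → Fin (q+1)) → ℝ) (d : Γ → ℝ) : Prop :=
  ∀ (σ : Γ → Fin (q+1)) (i : Γ) (b : Fin (q+1)),
    |g (Function.update σ i b) - g σ| ≤ d i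

/-- dependence on a finite set -/
def DepOn (g : (Γ → Fin (q+1)) → ℝ) (E : Finset Γ) : Prop :=
  ∀ σ σ' : Γ → Fin (q+1), (∀ x ∈ E, σ x = σ' x) → g σ = g σ'

lemma dep_tau {g : (Γ → Fin (q+1)) → ℝ} {E : Finset Γ} {v : Γ}
    (hg : DepOn q g E) (hn : ∀ u ∈ nbr v, u ∈ E) :
    DepOn q (tau q β Ψ nbr v g) E := by
  intro σ σ' h
  unfold tau
  refine Finset.sum_congr rfl fun b _ => ?_
  rw [siteP_local q β Ψ nbr (fun u hu => h u (hn u hu)) b]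
  congr 1
  refine hg _ _ fun x hx => ?_
  by_cases hxv : x = v
  · subst hxv; simp
  · rw [Function.update_of_ne hxv, Function.update_of_ne hxv]; exact h x hx

lemma osc_tau (hirr : ∀ v : Γ, v ∉ nbr v) (v : Γ)
    {g : (Γ → Fin (q+1)) → ℝ} {d : Γ → ℝ}
    (hg : OscB q g d) (hd : ∀ i, 0 ≤ d i) :
    OscB q (tau q β Ψ nbr v g)
      (fun i => if i = v then 0 else d i + pottsRho q β Ψ nbr i v * d v) := by
  intro σ i bh
  by_cases hiv : i = v
  · subst hiv
    simp only [if_pos rfl]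
    have : tau q β Ψ nbr i g (Function.update σ i bh) = tau q β Ψ nbr i g σ := by
      unfold tau
      refine Finset.sum_congr rfl fun b _ => ?_
      have h1 : pottsSiteP q β Ψ nbr i (Function.update σ i bh) b
          = pottsSiteP q β Ψ nbr i σ b :=
        siteP_local q β Ψ nbr
          (fun u hu => Function.update_of_ne (ne_of_mem_of_not_mem hu (hirr i)) _ _) b
      rw [h1, Function.update_idem]
    rw [this, sub_self, abs_zero]
    simp
  · simp only [if_neg hiv]
    set σ' := Function.update σ i bh with hσ'
    have hagree : ∀ w, w ≠ i → σ' w = σ w := fun w hw => Function.update_of_ne hw _ _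
    set h : Fin (q+1) → ℝ := fun b => g (Function.update σ v b) with hh
    have hne : (Finset.univ : Finset (Fin (q+1))).Nonempty := ⟨0, Finset.mem_univ _⟩
    set M := Finset.univ.sup' hne h with hM
    set m := Finset.univ.inf' hne h with hm
    have hMm : M - m ≤ d v := by
      obtain ⟨bM, -, hbM⟩ := Finset.exists_mem_eq_sup' hne h
      obtain ⟨bm, -, hbm⟩ := Finset.exists_mem_eq_inf' hne h
      rw [hM, hm, hbM, hbm]
      have h2 : Function.update σ v bM
          = Function.update (Function.update σ v bm) v bM := by
        rw [Function.update_idem]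
      have h3 : h bM - h bm ≤ |h bM - h bm| := le_abs_self _
      have h4 : |h bM - h bm| ≤ d v := by
        rw [hh]
        simp only
        rw [h2]
        exact hg _ v bM
      linarith
    have hhb : ∀ b, |h b - (M + m)/2| ≤ d v / 2 := by
      intro b
      have h1 : h b ≤ M := Finset.le_sup' h (Finset.mem_univ b)
      have h2 : m ≤ h b := Finset.inf'_le h (Finset.mem_univ b)
      rw [abs_le]
      constructor <;> linarith
    have hsum0 : ∑ b, (pottsSiteP q β Ψ nbr v σ' b - pottsSiteP q β Ψ nbr v σ b) = 0 := by
      rw [Finset.sum_sub_distrib, siteP_sum, siteP_sum, sub_self]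
    have split : tau q β Ψ nbr v g σ' - tau q β Ψ nbr v g σ =
        (∑ b, pottsSiteP q β Ψ nbr v σ' b * (g (Function.update σ' v b) - h b)) +
          ∑ b, (pottsSiteP q β Ψ nbr v σ' b - pottsSiteP q β Ψ nbr v σ b) * h b := by
      unfold tau
      rw [← Finset.sum_add_distrib, ← Finset.sum_sub_distrib]
      refine Finset.sum_congr rfl fun b _ => ?_
      rw [hh]
      ring
    have hA : |∑ b, pottsSiteP q β Ψ nbr v σ' b * (g (Function.update σ' v b) - h b)|
        ≤ d i := by
      calc |∑ b, pottsSiteP q β Ψ nbr v σ' b * (g (Function.update σ' v b) - h b)|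
          ≤ ∑ b, |pottsSiteP q β Ψ nbr v σ' b * (g (Function.update σ' v b) - h b)| :=
            Finset.abs_sum_le_sum_abs _ _
        _ ≤ ∑ b, pottsSiteP q β Ψ nbr v σ' b * d i := by
            refine Finset.sum_le_sum fun b _ => ?_
            rw [abs_mul, abs_of_nonneg (siteP_nonneg q β Ψ nbr v σ' b)]
            refine mul_le_mul_of_nonneg_left ?_ (siteP_nonneg q β Ψ nbr v σ' b)
            have hcomm : Function.update σ' v b
                = Function.update (Function.update σ v b) i bh := by
              rw [hσ', Function.update_comm hiv]
            rw [hcomm, hh]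
            exact hg _ i bh
        _ = d i := by rw [← Finset.sum_mul, siteP_sum, one_mul]
    have hB : |∑ b, (pottsSiteP q β Ψ nbr v σ' b - pottsSiteP q β Ψ nbr v σ b) * h b|
        ≤ pottsRho q β Ψ nbr i v * d v := by
      have key : ∑ b, (pottsSiteP q β Ψ nbr v σ' b - pottsSiteP q β Ψ nbr v σ b) * h b
          = ∑ b, (pottsSiteP q β Ψ nbr v σ' b - pottsSiteP q β Ψ nbr v σ b)
              * (h b - (M + m)/2) := by
        have expand : ∑ b, (pottsSiteP q β Ψ nbr v σ' b - pottsSiteP q β Ψ nbr v σ b)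
              * (h b - (M + m)/2)
            = (∑ b, (pottsSiteP q β Ψ nbr v σ' b - pottsSiteP q β Ψ nbr v σ b) * h b)
              - (M + m)/2 *
                ∑ b, (pottsSiteP q β Ψ nbr v σ' b - pottsSiteP q β Ψ nbr v σ b) := by
          rw [Finset.mul_sum, ← Finset.sum_sub_distrib]
          refine Finset.sum_congr rfl fun b _ => ?_
          ring
        rw [expand, hsum0]
        ring
      rw [key]
      calc |∑ b, (pottsSiteP q β Ψ nbr v σ' b - pottsSiteP q β Ψ nbr v σ b)
              * (h b - (M + m)/2)|
          ≤ ∑ b, |(pottsSiteP q β Ψ nbr v σ' b - pottsSiteP q β Ψ nbr v σ b)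
              * (h b - (M + m)/2)| := Finset.abs_sum_le_sum_abs _ _
        _ ≤ ∑ b, |pottsSiteP q β Ψ nbr v σ' b - pottsSiteP q β Ψ nbr v σ b| * (d v / 2) := by
            refine Finset.sum_le_sum fun b _ => ?_
            rw [abs_mul]
            exact mul_le_mul_of_nonneg_left (hhb b) (abs_nonneg _)
        _ = (∑ b, |pottsSiteP q β Ψ nbr v σ' b - pottsSiteP q β Ψ nbr v σ b|) * (d v / 2) :=
            (Finset.sum_mul _ _ _).symm
        _ ≤ (2 * pottsRho q β Ψ nbr i v) * (d v / 2) := by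
            refine mul_le_mul_of_nonneg_right ?_ (by linarith [hd v])
            exact tv_le_rho q β Ψ nbr hagree
        _ = pottsRho q β Ψ nbr i v * d v := by ring
    calc |tau q β Ψ nbr v g σ' - tau q β Ψ nbr v g σ|
        ≤ |∑ b, pottsSiteP q β Ψ nbr v σ' b * (g (Function.update σ' v b) - h b)| +
            |∑ b, (pottsSiteP q β Ψ nbr v σ' b - pottsSiteP q β Ψ nbr v σ b) * h b| := by
          rw [split]; exact abs_add_le _ _
      _ ≤ d i + pottsRho q β Ψ nbr i v * d v := add_le_add hA hB

end PottsAux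
namespace PottsAux

variable (q : ℕ) (β : ℝ) (Ψ : Γ → Fin (q+1) → ℝ) (nbr : Γ → Finset Γ)

/-- sequential sweep -/
def tauSeq : List Γ → ((Γ → Fin (q+1)) → ℝ) → ((Γ → Fin (q+1)) → ℝ)
  | [], g => g
  | v :: L, g => tauSeq L (tau q β Ψ nbr v g)

lemma dep_tauSeq {E : Finset Γ} :
    ∀ (L : List Γ) (g : (Γ → Fin (q+1)) → ℝ), DepOn q g E →
      (∀ v ∈ L, ∀ u ∈ nbr v, u ∈ E) → DepOn q (tauSeq q β Ψ nbr L g) E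
  | [], g, hg, _ => hg
  | v :: L, g, hg, hL => by
    refine dep_tauSeq L _ (dep_tau q β Ψ nbr hg (hL v (List.mem_cons_self))) ?_
    exact fun w hw => hL w (List.mem_cons_of_mem v hw)

lemma osc_diff {g : (Γ → Fin (q+1)) → ℝ} {d : Γ → ℝ} (hg : OscB q g d) :
    ∀ (S : Finset Γ) (σ σ' : Γ → Fin (q+1)), (∀ x, x ∉ S → σ x = σ' x) →
      |g σ - g σ'| ≤ ∑ i ∈ S, d i := by
  intro S
  induction S using Finset.induction_on with
  | empty =>
    intro σ σ' hagree
    have : σ = σ' := funext fun x => hagree x (Finset.notMem_empty x)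
    simp [this]
  | @insert i S hi IH =>
    intro σ σ' hagree
    set σ'' := Function.update σ i (σ' i) with hσ''
    have h1 : |g σ'' - g σ| ≤ d i := hg σ i (σ' i)
    have h2 : |g σ'' - g σ'| ≤ ∑ x ∈ S, d x := by
      refine IH σ'' σ' fun x hx => ?_
      by_cases hxi : x = i
      · subst hxi; simp [hσ'']
      · rw [hσ'', Function.update_of_ne hxi]
        exact hagree x (by simp [hxi, hx])
    rw [Finset.sum_insert hi]
    calc |g σ - g σ'| ≤ |g σ - g σ''| + |g σ'' - g σ'| := abs_sub_le _ _ _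
      _ ≤ d i + ∑ x ∈ S, d x := add_le_add (by rwa [abs_sub_comm]) h2

/-- The main sweep estimate. -/
lemma sweep_aux (hirr : ∀ v : Γ, v ∉ nbr v) (ℓ : Γ → ℕ)
    (hℓnbr : ∀ v u : Γ, u ∈ nbr v → ℓ u ≤ ℓ v + 1)
    (α : ℝ) (hα0 : 0 ≤ α) (hα1 : α ≤ 1)
    (hrle : ∀ v : Γ, (∑ i ∈ nbr v, pottsRho q β Ψ nbr i v) ≤ α)
    (k : ℕ) (U : Finset Γ) :
    ∀ (L : List Γ) (P : Finset Γ) (g : (Γ → Fin (q+1)) → ℝ) (d : Γ → ℝ),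
    L.Nodup → (∀ x ∈ L, x ∉ P) → (∀ x ∈ L, x ∈ U) → P ⊆ U →
    List.Pairwise (fun a b => ℓ b ≤ ℓ a) L →
    OscB q g d → (∀ i, 0 ≤ d i) →
    (∀ i, d i ≠ 0 → i ∈ L ∨ i ∈ P) →
    (∀ i, d i ≠ 0 → i ∈ L → ℓ i ≤ k) →
    (∀ i, d i ≠ 0 → ℓ i ≤ k + 1) →
    (∀ v ∈ L, ℓ v ≤ k → ∀ u ∈ nbr v, u ∈ L ∨ u ∈ P) →
    ∃ d' : Γ → ℝ, OscB q (tauSeq q β Ψ nbr L g) d' ∧ (∀ i, 0 ≤ d' i) ∧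
      (∀ i, d' i ≠ 0 → i ∈ L ∨ i ∈ P) ∧
      (∀ i, d' i ≠ 0 → ℓ i ≤ k + 1) ∧
      (∑ i ∈ U, d' i) ≤ α * (∑ i ∈ U \ P, d i) + ∑ i ∈ P, d i := by
  intro L
  induction L with
  | nil =>
    intro P g d _ _ _ hPU _ hg hd hmass _ hlayerAll _
    refine ⟨d, hg, hd, fun i hi => (hmass i hi).imp id id, hlayerAll, ?_⟩
    have h0 : ∑ i ∈ U \ P, d i = 0 := by
      refine Finset.sum_eq_zero fun i hi => ?_
      by_contra hne
      rcases hmass i hne with h | h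
      · exact List.not_mem_nil h
      · exact (Finset.mem_sdiff.1 hi).2 h
    calc ∑ i ∈ U, d i = ∑ i ∈ U \ P, d i + ∑ i ∈ P, d i := (Finset.sum_sdiff hPU).symm
      _ ≤ α * ∑ i ∈ U \ P, d i + ∑ i ∈ P, d i := by rw [h0]; simp
  | cons v T IH =>
    intro P g d hnd hLP hLU hPU hpw hg hd hmass hlayerL hlayerAll hnbr
    have hvT : v ∉ T := (List.nodup_cons.1 hnd).1
    have hndT : T.Nodup := (List.nodup_cons.1 hnd).2
    have hvU : v ∈ U := hLU v (List.mem_cons_self)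
    have hvP : v ∉ P := hLP v (List.mem_cons_self)
    have hpwhead : ∀ b ∈ T, ℓ b ≤ ℓ v := (List.pairwise_cons.1 hpw).1
    have hpwT : List.Pairwise (fun a b => ℓ b ≤ ℓ a) T := (List.pairwise_cons.1 hpw).2
    set d1 : Γ → ℝ := fun i => if i = v then 0
      else d i + pottsRho q β Ψ nbr i v * d v with hd1
    have hg1 : OscB q (tau q β Ψ nbr v g) d1 := osc_tau q β Ψ nbr hirr v hg hd
    have hd1n : ∀ i, 0 ≤ d1 i := by
      intro i
      rw [hd1]
      by_cases h : i = v
      · simp [h]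
      · simp only [if_neg h]
        exact add_nonneg (hd i) (mul_nonneg (rho_nonneg q β Ψ nbr i v) (hd v))
    have hcases : ∀ i, d1 i ≠ 0 → i ≠ v ∧ (d i ≠ 0 ∨ (i ∈ nbr v ∧ d v ≠ 0)) := by
      intro i hi
      by_cases h : i = v
      · exact absurd (by simp [hd1, h]) hi
      refine ⟨h, ?_⟩
      by_cases hdi : d i = 0
      · right
        have hmul : pottsRho q β Ψ nbr i v * d v ≠ 0 := by
          intro hz
          exact hi (by simp [hd1, h, hdi, hz])
        have hρ : pottsRho q β Ψ nbr i v ≠ 0 := fun hz => hmul (by rw [hz, zero_mul])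
        have hdv : d v ≠ 0 := fun hz => hmul (by rw [hz, mul_zero])
        refine ⟨?_, hdv⟩
        by_contra hnm
        exact hρ (rho_eq_zero q β Ψ nbr hirr hnm)
      · left; exact hdi
    have hlv : d v ≠ 0 → ℓ v ≤ k := fun h => hlayerL v h (List.mem_cons_self)
    obtain ⟨d2, hg2, hd2n, hsupp2, hlay2, hsum2⟩ :=
      IH (insert v P) (tau q β Ψ nbr v g) d1 hndT
        (by
          intro x hx hmem
          rcases Finset.mem_insert.1 hmem with h | h
          · exact hvT (h ▸ hx)
          · exact hLP x (List.mem_cons_of_mem v hx) h)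
        (fun x hx => hLU x (List.mem_cons_of_mem v hx))
        (Finset.insert_subset hvU hPU) hpwT hg1 hd1n
        (by
          intro i hi
          obtain ⟨hne, hca⟩ := hcases i hi
          rcases hca with hdi | ⟨hin, hdv⟩
          · rcases hmass i hdi with h | h
            · rcases List.mem_cons.1 h with h' | h'
              · exact absurd h' hne
              · exact Or.inl h'
            · exact Or.inr (Finset.mem_insert_of_mem h)
          · rcases hnbr v (List.mem_cons_self) (hlv hdv) i hin with h | h
            · rcases List.mem_cons.1 h with h' | h'
              · exact absurd h' hne
              · exact Or.inl h'
            · exact Or.inr (Finset.mem_insert_of_mem h))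
        (by
          intro i hi hiT
          obtain ⟨hne, hca⟩ := hcases i hi
          rcases hca with hdi | ⟨hin, hdv⟩
          · exact hlayerL i hdi (List.mem_cons_of_mem v hiT)
          · exact le_trans (hpwhead i hiT) (hlv hdv))
        (by
          intro i hi
          obtain ⟨hne, hca⟩ := hcases i hi
          rcases hca with hdi | ⟨hin, hdv⟩
          · exact hlayerAll i hdi
          · have hk := hlv hdv
            calc ℓ i ≤ ℓ v + 1 := hℓnbr v i hin
              _ ≤ k + 1 := by omega)
        (by
          intro v' hv' hlv' u hu
          rcases hnbr v' (List.mem_cons_of_mem v hv') hlv' u hu with h | h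
          · rcases List.mem_cons.1 h with h' | h'
            · exact Or.inr (h' ▸ Finset.mem_insert_self v P)
            · exact Or.inl h'
          · exact Or.inr (Finset.mem_insert_of_mem h))
    refine ⟨d2, hg2, hd2n, ?_, hlay2, ?_⟩
    · intro i hi
      rcases hsupp2 i hi with h | h
      · exact Or.inl (List.mem_cons_of_mem v h)
      · rcases Finset.mem_insert.1 h with h' | h'
        · exact Or.inl (h' ▸ (List.mem_cons_self : v ∈ v :: T))
        · exact Or.inr h'
    · -- the potential estimate
      have hEeq : U \ insert v P = (U \ P).erase v := Finset.sdiff_insert U P v ▸ rfl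
      set E := (U \ P).erase v with hE
      have hvUP : v ∈ U \ P := Finset.mem_sdiff.2 ⟨hvU, hvP⟩
      have hiEne : ∀ i ∈ E, i ≠ v := fun i hi => Finset.ne_of_mem_erase hi
      have hiPne : ∀ i ∈ P, i ≠ v := fun i hi h => hvP (h ▸ hi)
      have hsumE : ∑ i ∈ E, d1 i
          = (∑ i ∈ E, d i) + (∑ i ∈ E, pottsRho q β Ψ nbr i v) * d v := by
        rw [Finset.sum_mul, ← Finset.sum_add_distrib]
        refine Finset.sum_congr rfl fun i hi => ?_
        rw [hd1]
        simp only [if_neg (hiEne i hi)]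
      have hsumP : ∑ i ∈ P, d1 i
          = (∑ i ∈ P, d i) + (∑ i ∈ P, pottsRho q β Ψ nbr i v) * d v := by
        rw [Finset.sum_mul, ← Finset.sum_add_distrib]
        refine Finset.sum_congr rfl fun i hi => ?_
        rw [hd1]
        simp only [if_neg (hiPne i hi)]
      have hinsP : ∑ i ∈ insert v P, d1 i = ∑ i ∈ P, d1 i := by
        rw [Finset.sum_insert hvP, hd1]
        simp
      have hUPsplit : ∑ i ∈ U \ P, d i = d v + ∑ i ∈ E, d i := by
        rw [hE, Finset.add_sum_erase _ _ hvUP]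
      have hdisj : Disjoint E P := by
        refine Finset.disjoint_left.2 fun i hi hip => ?_
        exact (Finset.mem_sdiff.1 (Finset.mem_of_mem_erase hi)).2 hip
      have hRsum : (∑ i ∈ E, pottsRho q β Ψ nbr i v)
          + (∑ i ∈ P, pottsRho q β Ψ nbr i v) ≤ α := by
        rw [← Finset.sum_union hdisj]
        calc ∑ i ∈ E ∪ P, pottsRho q β Ψ nbr i v
            = ∑ i ∈ (E ∪ P) ∩ nbr v, pottsRho q β Ψ nbr i v := by
              refine (Finset.sum_subset (Finset.inter_subset_left) ?_).symm
              intro x hx hnx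
              refine rho_eq_zero q β Ψ nbr hirr fun hmem => ?_
              exact hnx (Finset.mem_inter.2 ⟨hx, hmem⟩)
          _ ≤ ∑ i ∈ nbr v, pottsRho q β Ψ nbr i v := by
              refine Finset.sum_le_sum_of_subset_of_nonneg Finset.inter_subset_right ?_
              intro i _ _
              exact rho_nonneg q β Ψ nbr i v
          _ ≤ α := hrle v
      have hRE0 : 0 ≤ ∑ i ∈ E, pottsRho q β Ψ nbr i v :=
        Finset.sum_nonneg fun i _ => rho_nonneg q β Ψ nbr i v
      have hRP0 : 0 ≤ ∑ i ∈ P, pottsRho q β Ψ nbr i v :=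
        Finset.sum_nonneg fun i _ => rho_nonneg q β Ψ nbr i v
      have hdv0 : 0 ≤ d v := hd v
      calc ∑ i ∈ U, d2 i
          ≤ α * (∑ i ∈ U \ insert v P, d1 i) + ∑ i ∈ insert v P, d1 i := hsum2
        _ = α * ((∑ i ∈ E, d i) + (∑ i ∈ E, pottsRho q β Ψ nbr i v) * d v)
            + ((∑ i ∈ P, d i) + (∑ i ∈ P, pottsRho q β Ψ nbr i v) * d v) := by
            rw [hEeq, hsumE, hinsP, hsumP]
        _ ≤ α * (d v + ∑ i ∈ E, d i) + ∑ i ∈ P, d i := by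
            nlinarith [mul_le_mul_of_nonneg_right hRsum hdv0,
              mul_nonneg hRE0 hdv0, mul_nonneg hRP0 hdv0]
        _ = α * (∑ i ∈ U \ P, d i) + ∑ i ∈ P, d i := by rw [hUPsplit]

end PottsAux
namespace PottsAux

variable (q : ℕ) (β : ℝ) (Ψ : Γ → Fin (q+1) → ℝ) (nbr : Γ → Finset Γ)

/-- glue an interior configuration with a boundary condition -/
def glue (Br : Finset Γ) (ξ : {x // x ∈ Br} → Fin (q+1)) (η : Γ → Fin (q+1)) :
    Γ → Fin (q+1) := fun w => if h : w ∈ Br then ξ ⟨w, h⟩ else η w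

/-- total energy, as a function of a full configuration -/
def En (Br : Finset Γ) (c : Γ → Fin (q+1)) : ℝ :=
  β * ∑ w ∈ Br, ∑ u ∈ nbr w,
      (if u ∈ Br then (1/2 : ℝ) else 1) * (if c u = c w then 1 else 0)
    + ∑ w ∈ Br, Ψ w (c w)

lemma weight_eq (Br : Finset Γ) (η : Γ → Fin (q+1)) (ξ : {x // x ∈ Br} → Fin (q+1)) :
    pottsBallWeight q β Ψ nbr Br η ξ = Real.exp (En q β Ψ nbr Br (glue q Br ξ η)) := by
  simp only [pottsBallWeight, En, glue]
  congr 2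
  · congr 1
    exact Finset.sum_attach Br fun w => ∑ u ∈ nbr w, (if u ∈ Br then (1/2:ℝ) else 1)
      * (if (if h : u ∈ Br then ξ ⟨u,h⟩ else η u) = (if h : w ∈ Br then ξ ⟨w,h⟩ else η w)
          then 1 else 0)
  · exact Finset.sum_attach Br fun w => Ψ w (if h : w ∈ Br then ξ ⟨w,h⟩ else η w)

lemma glue_mem (Br : Finset Γ) (ξ : {x // x ∈ Br} → Fin (q+1)) (η : Γ → Fin (q+1))
    {v : Γ} (hv : v ∈ Br) : glue q Br ξ η v = ξ ⟨v, hv⟩ := dif_pos hv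

lemma glue_update (Br : Finset Γ) (ξ : {x // x ∈ Br} → Fin (q+1)) (η : Γ → Fin (q+1))
    {v : Γ} (hv : v ∈ Br) (b : Fin (q+1)) :
    glue q Br (Function.update ξ ⟨v, hv⟩ b) η = Function.update (glue q Br ξ η) v b := by
  funext w
  by_cases hw : w = v
  · subst hw
    rw [Function.update_self]
    unfold glue
    rw [dif_pos hv, Function.update_self]
  · rw [Function.update_of_ne hw]
    unfold glue
    by_cases hwB : w ∈ Br
    · rw [dif_pos hwB, dif_pos hwB,
        Function.update_of_ne (fun h => hw (congrArg Subtype.val h))]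
    · rw [dif_neg hwB, dif_neg hwB]

lemma ite_eq_comm (x y : Fin (q+1)) :
    (if x = y then (1:ℝ) else 0) = (if y = x then 1 else 0) := by
  by_cases h : x = y
  · simp [h]
  · simp [h, Ne.symm h]

/-- energy splitting at a site of the ball -/
lemma energy_split (hsym : ∀ u v : Γ, u ∈ nbr v ↔ v ∈ nbr u)
    (hirr : ∀ v : Γ, v ∉ nbr v) (Br : Finset Γ) {v : Γ} (hv : v ∈ Br)
    (c : Γ → Fin (q+1)) (b : Fin (q+1)) :
    En q β Ψ nbr Br (Function.update c v b)
      = F q β Ψ nbr v c b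
        + (β * ∑ w ∈ Br.erase v, ∑ u ∈ (nbr w).erase v,
            (if u ∈ Br then (1/2 : ℝ) else 1) * (if c u = c w then 1 else 0)
          + ∑ w ∈ Br.erase v, Ψ w (c w)) := by
  set cb := Function.update c v b with hcb
  have hcbv : cb v = b := Function.update_self v b c
  have hcbne : ∀ {u : Γ}, u ≠ v → cb u = c u := fun h => Function.update_of_ne h _ _
  -- Ψ part
  have hΨ : ∑ w ∈ Br, Ψ w (cb w) = Ψ v b + ∑ w ∈ Br.erase v, Ψ w (c w) := by
    rw [← Finset.add_sum_erase _ _ hv, hcbv]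
    congr 1
    exact Finset.sum_congr rfl fun w hw => by rw [hcbne (Finset.ne_of_mem_erase hw)]
  -- edge part
  have hedge : ∑ w ∈ Br, ∑ u ∈ nbr w,
        (if u ∈ Br then (1/2 : ℝ) else 1) * (if cb u = cb w then 1 else 0)
      = (∑ u ∈ nbr v, (if c u = b then (1:ℝ) else 0))
        + ∑ w ∈ Br.erase v, ∑ u ∈ (nbr w).erase v,
            (if u ∈ Br then (1/2 : ℝ) else 1) * (if c u = c w then 1 else 0) := by
    rw [← Finset.add_sum_erase _ _ hv]
    have hTv : ∑ u ∈ nbr v, (if u ∈ Br then (1/2 : ℝ) else 1) * (if cb u = cb v then 1 else 0)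
        = ∑ u ∈ nbr v, (if u ∈ Br then (1/2 : ℝ) else 1) * (if c u = b then 1 else 0) := by
      refine Finset.sum_congr rfl fun u hu => ?_
      rw [hcbv, hcbne (ne_of_mem_of_not_mem hu (hirr v))]
    have hTw : ∀ w ∈ Br.erase v,
        ∑ u ∈ nbr w, (if u ∈ Br then (1/2 : ℝ) else 1) * (if cb u = cb w then 1 else 0)
          = (if w ∈ nbr v then (1/2 : ℝ) * (if c w = b then 1 else 0) else 0)
            + ∑ u ∈ (nbr w).erase v,
                (if u ∈ Br then (1/2 : ℝ) else 1) * (if c u = c w then 1 else 0) := by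
      intro w hw
      have hwv : w ≠ v := Finset.ne_of_mem_erase hw
      have hrest : ∑ u ∈ (nbr w).erase v,
            (if u ∈ Br then (1/2 : ℝ) else 1) * (if cb u = cb w then 1 else 0)
          = ∑ u ∈ (nbr w).erase v,
            (if u ∈ Br then (1/2 : ℝ) else 1) * (if c u = c w then 1 else 0) :=
        Finset.sum_congr rfl fun u hu => by
          rw [hcbne (Finset.ne_of_mem_erase hu), hcbne hwv]
      by_cases hvw : v ∈ nbr w
      · rw [← Finset.add_sum_erase _ _ hvw, hrest, if_pos hv, hcbv, hcbne hwv,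
          if_pos ((hsym w v).2 hvw), ite_eq_comm]
      · rw [if_neg (fun h : w ∈ nbr v => hvw ((hsym w v).1 h)), zero_add, ← hrest,
          Finset.erase_eq_of_notMem hvw]
    rw [hTv, Finset.sum_congr rfl hTw, Finset.sum_add_distrib]
    have hcol : ∑ w ∈ Br.erase v,
          (if w ∈ nbr v then (1/2 : ℝ) * (if c w = b then 1 else 0) else 0)
        = ∑ u ∈ nbr v, (if u ∈ Br then (1/2 : ℝ) * (if c u = b then 1 else 0) else 0) := by
      rw [Finset.sum_erase _ (by rw [if_neg (hirr v)]),
        Finset.sum_ite_mem, Finset.sum_ite_mem, Finset.inter_comm]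
    rw [hcol, ← add_assoc, ← Finset.sum_add_distrib]
    congr 1
    refine Finset.sum_congr rfl fun u _ => ?_
    by_cases hu : u ∈ Br
    · rw [if_pos hu, if_pos hu]; ring
    · rw [if_neg hu, if_neg hu]; ring
  unfold En F
  rw [hΨ, hedge]
  ring

end PottsAux
namespace PottsAux

variable (q : ℕ) (β : ℝ) (Ψ : Γ → Fin (q+1) → ℝ) (nbr : Γ → Finset Γ)

lemma weight_update_mul (hsym : ∀ u v : Γ, u ∈ nbr v ↔ v ∈ nbr u)
    (hirr : ∀ v : Γ, v ∉ nbr v) (Br : Finset Γ) {v : Γ} (hv : v ∈ Br)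
    (η : Γ → Fin (q+1)) (ξ : {x // x ∈ Br} → Fin (q+1)) (b : Fin (q+1)) :
    pottsBallWeight q β Ψ nbr Br η (Function.update ξ ⟨v, hv⟩ b)
        * pottsSiteP q β Ψ nbr v (glue q Br (Function.update ξ ⟨v, hv⟩ b) η) (ξ ⟨v, hv⟩)
      = pottsBallWeight q β Ψ nbr Br η ξ * pottsSiteP q β Ψ nbr v (glue q Br ξ η) b := by
  set c := glue q Br ξ η with hc
  have hcv : c v = ξ ⟨v, hv⟩ := glue_mem q Br ξ η hv
  have hupd : glue q Br (Function.update ξ ⟨v, hv⟩ b) η = Function.update c v b :=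
    glue_update q Br ξ η hv b
  have hploc : ∀ b', pottsSiteP q β Ψ nbr v (Function.update c v b) b'
      = pottsSiteP q β Ψ nbr v c b' := fun b' =>
    siteP_local q β Ψ nbr
      (fun u hu => Function.update_of_ne (ne_of_mem_of_not_mem hu (hirr v)) _ _) b'
  have hW1 : pottsBallWeight q β Ψ nbr Br η (Function.update ξ ⟨v, hv⟩ b)
      = Real.exp (F q β Ψ nbr v c b
        + (β * ∑ w ∈ Br.erase v, ∑ u ∈ (nbr w).erase v,
            (if u ∈ Br then (1/2 : ℝ) else 1) * (if c u = c w then 1 else 0)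
          + ∑ w ∈ Br.erase v, Ψ w (c w))) := by
    rw [weight_eq, hupd, energy_split q β Ψ nbr hsym hirr Br hv]
  have hW2 : pottsBallWeight q β Ψ nbr Br η ξ
      = Real.exp (F q β Ψ nbr v c (c v)
        + (β * ∑ w ∈ Br.erase v, ∑ u ∈ (nbr w).erase v,
            (if u ∈ Br then (1/2 : ℝ) else 1) * (if c u = c w then 1 else 0)
          + ∑ w ∈ Br.erase v, Ψ w (c w))) := by
    rw [weight_eq, ← hc]
    conv_lhs => rw [← Function.update_eq_self v c]
    rw [energy_split q β Ψ nbr hsym hirr Br hv]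
  rw [hupd, hW1, hW2, hploc, siteP_eq, siteP_eq, hcv]
  simp only [Real.exp_add]
  ring

lemma sum_tau_invariant (hsym : ∀ u v : Γ, u ∈ nbr v ↔ v ∈ nbr u)
    (hirr : ∀ v : Γ, v ∉ nbr v) (Br : Finset Γ) {v : Γ} (hv : v ∈ Br)
    (η : Γ → Fin (q+1)) (g : (Γ → Fin (q+1)) → ℝ) :
    ∑ ξ : {x // x ∈ Br} → Fin (q+1),
        pottsBallWeight q β Ψ nbr Br η ξ * tau q β Ψ nbr v g (glue q Br ξ η)
      = ∑ ξ : {x // x ∈ Br} → Fin (q+1),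
          pottsBallWeight q β Ψ nbr Br η ξ * g (glue q Br ξ η) := by
  classical
  have step1 : ∀ ξ : {x // x ∈ Br} → Fin (q+1),
      pottsBallWeight q β Ψ nbr Br η ξ * tau q β Ψ nbr v g (glue q Br ξ η)
        = ∑ b, pottsBallWeight q β Ψ nbr Br η ξ
            * (pottsSiteP q β Ψ nbr v (glue q Br ξ η) b
              * g (Function.update (glue q Br ξ η) v b)) := by
    intro ξ
    rw [tau, Finset.mul_sum]
  set f : (({x // x ∈ Br} → Fin (q+1)) × Fin (q+1)) → ℝ :=
    fun x => pottsBallWeight q β Ψ nbr Br η x.1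
      * (pottsSiteP q β Ψ nbr v (glue q Br x.1 η) x.2
        * g (Function.update (glue q Br x.1 η) v x.2)) with hf
  have h2 : ∀ ξ : {x // x ∈ Br} → Fin (q+1),
      (∑ b, pottsBallWeight q β Ψ nbr Br η ξ
          * (pottsSiteP q β Ψ nbr v (glue q Br ξ η) b
            * g (Function.update (glue q Br ξ η) v b)))
        = ∑ b, f (ξ, b) := fun ξ => rfl
  rw [Finset.sum_congr rfl (fun ξ _ => (step1 ξ).trans (h2 ξ)), ← Fintype.sum_prod_type]
  set e : (({x // x ∈ Br} → Fin (q+1)) × Fin (q+1)) →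
      (({x // x ∈ Br} → Fin (q+1)) × Fin (q+1)) :=
    fun x => (Function.update x.1 ⟨v, hv⟩ x.2, x.1 ⟨v, hv⟩) with he
  have hinv : Function.Involutive e := by
    intro x
    rw [he]
    refine Prod.ext ?_ ?_
    · show Function.update (Function.update x.1 ⟨v, hv⟩ x.2) ⟨v, hv⟩ (x.1 ⟨v, hv⟩) = x.1
      rw [Function.update_idem, Function.update_eq_self]
    · exact Function.update_self _ _ _
  have hbij := hinv.bijective
  have hcomp : ∑ x, f (e x) = ∑ x, f x := Function.Bijective.sum_comp hbij f
  rw [← hcomp, Fintype.sum_prod_type]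
  refine Finset.sum_congr rfl fun ξ _ => ?_
  have hterm : ∀ b, f (e (ξ, b))
      = pottsBallWeight q β Ψ nbr Br η ξ * pottsSiteP q β Ψ nbr v (glue q Br ξ η) b
          * g (glue q Br ξ η) := by
    intro b
    have harg : Function.update (glue q Br (Function.update ξ ⟨v, hv⟩ b) η) v (ξ ⟨v, hv⟩)
        = glue q Br ξ η := by
      rw [glue_update q Br ξ η hv b, Function.update_idem,
        show ξ ⟨v, hv⟩ = glue q Br ξ η v from (glue_mem q Br ξ η hv).symm,
        Function.update_eq_self]
    show pottsBallWeight q β Ψ nbr Br η (Function.update ξ ⟨v, hv⟩ b)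
        * (pottsSiteP q β Ψ nbr v (glue q Br (Function.update ξ ⟨v, hv⟩ b) η) (ξ ⟨v, hv⟩)
          * g (Function.update (glue q Br (Function.update ξ ⟨v, hv⟩ b) η) v (ξ ⟨v, hv⟩)))
      = _
    rw [harg, ← mul_assoc, weight_update_mul q β Ψ nbr hsym hirr Br hv η ξ b]
  rw [Finset.sum_congr rfl fun b _ => hterm b, ← Finset.sum_mul, ← Finset.mul_sum,
    siteP_sum, mul_one]

lemma sum_tauSeq_invariant (hsym : ∀ u v : Γ, u ∈ nbr v ↔ v ∈ nbr u)
    (hirr : ∀ v : Γ, v ∉ nbr v) (Br : Finset Γ) (η : Γ → Fin (q+1)) :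
    ∀ (L : List Γ), (∀ v ∈ L, v ∈ Br) → ∀ (g : (Γ → Fin (q+1)) → ℝ),
      ∑ ξ : {x // x ∈ Br} → Fin (q+1),
          pottsBallWeight q β Ψ nbr Br η ξ * tauSeq q β Ψ nbr L g (glue q Br ξ η)
        = ∑ ξ : {x // x ∈ Br} → Fin (q+1),
            pottsBallWeight q β Ψ nbr Br η ξ * g (glue q Br ξ η)
  | [], _, g => rfl
  | v :: L, hL, g => by
    rw [show tauSeq q β Ψ nbr (v :: L) g = tauSeq q β Ψ nbr L (tau q β Ψ nbr v g) from rfl,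
      sum_tauSeq_invariant hsym hirr Br η L (fun w hw => hL w (List.mem_cons_of_mem v hw))]
    exact sum_tau_invariant q β Ψ nbr hsym hirr Br (hL v (List.mem_cons_self)) η g

end PottsAux
namespace PottsAux

lemma pairwise_of_forall_mem {γ : Type*} {R : γ → γ → Prop} :
    ∀ (l : List γ), (∀ a ∈ l, ∀ b ∈ l, R a b) → l.Pairwise R
  | [], _ => List.Pairwise.nil
  | a :: l, h => List.Pairwise.cons
      (fun b hb => h a (List.mem_cons_self) b (List.mem_cons_of_mem a hb))
      (pairwise_of_forall_mem l (fun x hx y hy =>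
        h x (List.mem_cons_of_mem a hx) y (List.mem_cons_of_mem a hy)))

/-- enumeration of the ball `B j` by decreasing layers -/
def layerList (B : ℕ → Finset Γ) : ℕ → List Γ
  | 0 => (B 0).toList
  | (j+1) => ((B (j+1)) \ (B j)).toList ++ layerList B j

lemma layerList_mem (B : ℕ → Finset Γ) (hBmono : Monotone B) :
    ∀ (j : ℕ) (x : Γ), x ∈ layerList B j ↔ x ∈ B j
  | 0, x => by simp [layerList]
  | (j+1), x => by
    simp only [layerList, List.mem_append, Finset.mem_toList, Finset.mem_sdiff,
      layerList_mem B hBmono j]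
    constructor
    · rintro (⟨h, -⟩ | h)
      · exact h
      · exact hBmono (Nat.le_succ j) h
    · intro h
      by_cases hj : x ∈ B j
      · exact Or.inr hj
      · exact Or.inl ⟨h, hj⟩

lemma layerList_nodup (B : ℕ → Finset Γ) (hBmono : Monotone B) :
    ∀ (j : ℕ), (layerList B j).Nodup
  | 0 => Finset.nodup_toList _
  | (j+1) => by
    rw [layerList, List.nodup_append]
    refine ⟨Finset.nodup_toList _, layerList_nodup B hBmono j, ?_⟩
    intro x hx x' hx' hxx'; subst hxx'
    rw [Finset.mem_toList, Finset.mem_sdiff] at hx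
    exact hx.2 ((layerList_mem B hBmono j x).1 hx')

lemma layerList_pairwise (B : ℕ → Finset Γ) (hBmono : Monotone B)
    (ℓ : Γ → ℕ) (hl : ∀ (x : Γ) (j : ℕ), x ∈ B j ↔ ℓ x ≤ j) :
    ∀ (j : ℕ), List.Pairwise (fun a b => ℓ b ≤ ℓ a) (layerList B j)
  | 0 => pairwise_of_forall_mem _ (by
      intro x hx y hy
      rw [layerList, Finset.mem_toList] at hx hy
      have := (hl y 0).1 hy
      omega)
  | (j+1) => by
    rw [layerList, List.pairwise_append]
    refine ⟨pairwise_of_forall_mem _ ?_, layerList_pairwise B hBmono ℓ hl j, ?_⟩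
    · intro x hx y hy
      rw [Finset.mem_toList, Finset.mem_sdiff] at hx hy
      have h1 := (hl y (j+1)).1 hy.1
      have h2 : ¬ ℓ x ≤ j := fun h => hx.2 ((hl x j).2 h)
      omega
    · intro x hx y hy
      rw [Finset.mem_toList, Finset.mem_sdiff] at hx
      have h1 := (hl y j).1 ((layerList_mem B hBmono j y).1 hy)
      have h2 : ¬ ℓ x ≤ j := fun h => hx.2 ((hl x j).2 h)
      omega

lemma expect_diff {I : Type*} [Fintype I] (ν ν' G : I → ℝ) (M : ℝ)
    (hν : ∀ i, 0 ≤ ν i) (hν' : ∀ i, 0 ≤ ν' i)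
    (h1 : ∑ i, ν i = 1) (h1' : ∑ i, ν' i = 1)
    (hM : ∀ i j, |G i - G j| ≤ M) :
    |∑ i, ν i * G i - ∑ j, ν' j * G j| ≤ M := by
  have l1 : ∑ i, ν i * G i = ∑ i, ∑ j, ν i * ν' j * G i := by
    refine Finset.sum_congr rfl fun i _ => ?_
    calc ν i * G i = (ν i * G i) * ∑ j, ν' j := by rw [h1', mul_one]
      _ = ∑ j, (ν i * G i) * ν' j := Finset.mul_sum _ _ _
      _ = ∑ j, ν i * ν' j * G i := Finset.sum_congr rfl fun j _ => by ring
  have l2 : ∑ j, ν' j * G j = ∑ i, ∑ j, ν i * ν' j * G j := by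
    calc ∑ j, ν' j * G j = (∑ i, ν i) * ∑ j, ν' j * G j := by rw [h1, one_mul]
      _ = ∑ i, ν i * ∑ j, ν' j * G j := Finset.sum_mul _ _ _
      _ = ∑ i, ∑ j, ν i * ν' j * G j := by
          refine Finset.sum_congr rfl fun i _ => ?_
          rw [Finset.mul_sum]
          exact Finset.sum_congr rfl fun j _ => by ring
  have e1 : ∑ i, ν i * G i - ∑ j, ν' j * G j
      = ∑ i, ∑ j, ν i * ν' j * (G i - G j) := by
    rw [l1, l2, ← Finset.sum_sub_distrib]
    refine Finset.sum_congr rfl fun i _ => ?_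
    rw [← Finset.sum_sub_distrib]
    exact Finset.sum_congr rfl fun j _ => by ring
  rw [e1]
  calc |∑ i, ∑ j, ν i * ν' j * (G i - G j)|
      ≤ ∑ i, |∑ j, ν i * ν' j * (G i - G j)| := Finset.abs_sum_le_sum_abs _ _
    _ ≤ ∑ i, ∑ j, |ν i * ν' j * (G i - G j)| :=
        Finset.sum_le_sum fun i _ => Finset.abs_sum_le_sum_abs _ _
    _ ≤ ∑ i, ∑ j, ν i * ν' j * M := by
        refine Finset.sum_le_sum fun i _ => Finset.sum_le_sum fun j _ => ?_
        rw [abs_mul, abs_mul, abs_of_nonneg (hν i), abs_of_nonneg (hν' j)]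
        exact mul_le_mul_of_nonneg_left (hM i j) (mul_nonneg (hν i) (hν' j))
    _ = M := by
        have hrow : ∀ i, ∑ j, ν i * ν' j * M = ν i * M := by
          intro i
          calc ∑ j, ν i * ν' j * M = ∑ j, (ν i * M) * ν' j :=
                Finset.sum_congr rfl fun j _ => by ring
            _ = (ν i * M) * ∑ j, ν' j := (Finset.mul_sum _ _ _).symm
            _ = ν i * M := by rw [h1', mul_one]
        rw [Finset.sum_congr rfl fun i _ => hrow i, ← Finset.sum_mul, h1, one_mul]

end PottsAux
namespace PottsAux

variable (q : ℕ) (β : ℝ) (Ψ : Γ → Fin (q+1) → ℝ) (nbr : Γ → Finset Γ)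

lemma prob_eq (Br : Finset Γ) (φ : Γ) (hφ : φ ∈ Br) (η : Γ → Fin (q+1)) (a : Fin (q+1)) :
    pottsBallProb q β Ψ nbr Br φ hφ η a
      = (∑ ξ : {x // x ∈ Br} → Fin (q+1), pottsBallWeight q β Ψ nbr Br η ξ *
          (if (glue q Br ξ η) φ = a then (1:ℝ) else 0)) /
        ∑ ξ : {x // x ∈ Br} → Fin (q+1), pottsBallWeight q β Ψ nbr Br η ξ := by
  unfold pottsBallProb
  congr 1
  rw [Finset.sum_filter]
  refine Finset.sum_congr rfl fun ξ _ => ?_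
  rw [glue_mem q Br ξ η hφ]
  by_cases h : ξ ⟨φ, hφ⟩ = a
  · rw [if_pos h, if_pos h, mul_one]
  · rw [if_neg h, if_neg h, mul_zero]

end PottsAux

/-- Dobrushin-type contraction for the Potts model on the
`d`-regular tree (root `φ`, balls `B r`): if the Dobrushin condition
`α = sup_j Σ_{i ≠ j} ρ_{i,j} < 1` holds, then for every `r ≥ 1`, colour `a`,
and boundary conditions `η, ξ` on `T_d(r)^c`,
`|μ_{Φ+Ψ,T_d(r),η}(σ_φ = a) − μ_{Φ+Ψ,T_d(r),ξ}(σ_φ = a)| ≤ α^{r-1}`. -/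
theorem potts_dobrushin_contraction [Countable Γ]
    (q : ℕ) (β : ℝ) (Ψ : Γ → Fin (q+1) → ℝ)
    (nbr : Γ → Finset Γ) (hsym : ∀ u v : Γ, u ∈ nbr v ↔ v ∈ nbr u)
    (hirr : ∀ v : Γ, v ∉ nbr v)
    (φ : Γ) (B : ℕ → Finset Γ) (hB0 : B 0 = {φ}) (hBmono : Monotone B)
    (hφB : ∀ r, φ ∈ B r)
    (hBnbr : ∀ r, ∀ v ∈ B r, ∀ u ∈ nbr v, u ∈ B (r+1))
    (hBcover : ∀ v : Γ, ∃ r, v ∈ B r)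
    (α : ℝ) (hα : α < 1)
    (hdob : ∀ j : Γ,
      ∑' i : Γ, (if i = j then 0 else pottsRho q β Ψ nbr i j) ≤ α) :
    ∀ r : ℕ, 1 ≤ r → ∀ (a : Fin (q+1)) (η ξ : Γ → Fin (q+1)),
      |pottsBallProb q β Ψ nbr (B r) φ (hφB r) η a -
        pottsBallProb q β Ψ nbr (B r) φ (hφB r) ξ a| ≤ α ^ (r - 1) := by
  intro r hr a η ξbd
  classical
  have hφU : φ ∈ B r := hφB r
  -- layer function
  set ℓ : Γ → ℕ := fun v => Nat.find (hBcover v) with hℓ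
  have hlmem : ∀ v, v ∈ B (ℓ v) := fun v => Nat.find_spec (hBcover v)
  have hlB : ∀ (x : Γ) (j : ℕ), x ∈ B j ↔ ℓ x ≤ j := by
    intro x j
    constructor
    · intro h; exact Nat.find_min' _ h
    · intro h; exact hBmono h (hlmem x)
  have hlnbr : ∀ v u : Γ, u ∈ nbr v → ℓ u ≤ ℓ v + 1 := fun v u hu =>
    (hlB u (ℓ v + 1)).1 (hBnbr (ℓ v) v (hlmem v) u hu)
  have hlφ : ℓ φ ≤ 0 := (hlB φ 0).1 (hB0 ▸ Finset.mem_singleton_self φ)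
  -- α is nonnegative
  have hρ0 : ∀ i j : Γ, 0 ≤ (if i = j then (0:ℝ) else pottsRho q β Ψ nbr i j) := by
    intro i j
    by_cases h : i = j
    · rw [if_pos h]
    · rw [if_neg h]; exact PottsAux.rho_nonneg q β Ψ nbr i j
  have hα0 : 0 ≤ α := le_trans (tsum_nonneg (fun i => hρ0 i φ)) (hdob φ)
  have hrle : ∀ v : Γ, (∑ i ∈ nbr v, pottsRho q β Ψ nbr i v) ≤ α := by
    intro v
    have hsupp : ∀ i ∉ nbr v, (if i = v then (0:ℝ) else pottsRho q β Ψ nbr i v) = 0 := by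
      intro i hi
      by_cases h : i = v
      · rw [if_pos h]
      · rw [if_neg h]; exact PottsAux.rho_eq_zero q β Ψ nbr hirr hi
    have ht : ∑' i, (if i = v then (0:ℝ) else pottsRho q β Ψ nbr i v)
        = ∑ i ∈ nbr v, (if i = v then (0:ℝ) else pottsRho q β Ψ nbr i v) :=
      tsum_eq_sum hsupp
    have hsum : ∑ i ∈ nbr v, (if i = v then (0:ℝ) else pottsRho q β Ψ nbr i v)
        = ∑ i ∈ nbr v, pottsRho q β Ψ nbr i v :=
      Finset.sum_congr rfl fun i hi => if_neg (ne_of_mem_of_not_mem hi (hirr v))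
    calc ∑ i ∈ nbr v, pottsRho q β Ψ nbr i v
        = ∑' i, (if i = v then (0:ℝ) else pottsRho q β Ψ nbr i v) := by rw [ht, hsum]
      _ ≤ α := hdob v
  -- the sweep list
  set S := PottsAux.layerList B (r-1) with hS
  have hSmem : ∀ x, x ∈ S ↔ x ∈ B (r-1) := fun x => PottsAux.layerList_mem B hBmono (r-1) x
  have hSnd : S.Nodup := PottsAux.layerList_nodup B hBmono (r-1)
  have hSpw : List.Pairwise (fun a b => ℓ b ≤ ℓ a) S :=
    PottsAux.layerList_pairwise B hBmono ℓ hlB (r-1)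
  have hr1 : r - 1 + 1 = r := Nat.succ_pred_eq_of_pos hr
  have hSU : ∀ x ∈ S, x ∈ B r := fun x hx => hBmono (Nat.sub_le r 1) ((hSmem x).1 hx)
  -- iterated sweeps of the indicator
  set f : (Γ → Fin (q+1)) → ℝ := fun σ => if σ φ = a then 1 else 0 with hf
  set Gs : ℕ → ((Γ → Fin (q+1)) → ℝ) := fun n =>
    Nat.rec f (fun _ g => PottsAux.tauSeq q β Ψ nbr S g) n with hGs
  have hGs0 : Gs 0 = f := rfl
  have hGsS : ∀ j, Gs (j+1) = PottsAux.tauSeq q β Ψ nbr S (Gs j) := fun _ => rfl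
  -- oscillation control by induction on the number of sweeps
  have main : ∀ j, j ≤ r - 1 → ∃ d : Γ → ℝ, PottsAux.OscB q (Gs j) d ∧
      (∀ i, 0 ≤ d i) ∧ (∀ i, d i ≠ 0 → ℓ i ≤ j) ∧ ∑ i ∈ B r, d i ≤ α ^ j := by
    intro j
    induction j with
    | zero =>
      intro _
      refine ⟨fun i => if i = φ then 1 else 0, ?_, ?_, ?_, ?_⟩
      · intro σ i b
        have hfval : ∀ τ : Γ → Fin (q+1), Gs 0 τ = if τ φ = a then (1:ℝ) else 0 :=
          fun τ => rfl
        show |Gs 0 (Function.update σ i b) - Gs 0 σ| ≤ if i = φ then (1:ℝ) else 0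
        rw [hfval, hfval]
        by_cases hi : i = φ
        · rw [if_pos hi]
          by_cases h1 : Function.update σ i b φ = a <;> by_cases h2 : σ φ = a <;>
            simp [h1, h2]
        · rw [if_neg hi, Function.update_of_ne (fun h => hi h.symm)]
          simp
      · intro i
        by_cases h : i = φ <;> simp [h]
      · intro i hi
        by_cases h : i = φ
        · exact le_trans (le_of_eq (congrArg ℓ h)) hlφ
        · exact absurd (by simp [h]) hi
      · calc ∑ i ∈ B r, (fun i => if i = φ then (1:ℝ) else 0) i
            = if φ ∈ B r then (1:ℝ) else 0 := Finset.sum_ite_eq' (B r) φ (fun _ => (1:ℝ))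
          _ = 1 := if_pos hφU
          _ ≤ α ^ 0 := by rw [pow_zero]
    | succ j IH =>
      intro hj
      obtain ⟨d, hosc, hd0, hlay, hsum⟩ := IH (Nat.le_of_succ_le hj)
      obtain ⟨d', hosc', hd0', hsupp', hlay', hsum'⟩ :=
        PottsAux.sweep_aux q β Ψ nbr hirr ℓ hlnbr α hα0 (le_of_lt hα) hrle j (B r)
          S ∅ (Gs j) d hSnd (fun x _ => Finset.notMem_empty x) hSU
          (Finset.empty_subset _) hSpw hosc hd0
          (fun i hi => Or.inl ((hSmem i).2 ((hlB i (r-1)).2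
            (le_trans (hlay i hi) (by omega)))))
          (fun i hi _ => hlay i hi)
          (fun i hi => le_trans (hlay i hi) (Nat.le_succ j))
          (by
            intro v hv hlv u hu
            refine Or.inl ((hSmem u).2 ((hlB u (r-1)).2 ?_))
            have := hlnbr v u hu
            omega)
      refine ⟨d', by rw [hGsS]; exact hosc', hd0', hlay', ?_⟩
      calc ∑ i ∈ B r, d' i
          ≤ α * (∑ i ∈ (B r) \ ∅, d i) + ∑ i ∈ (∅ : Finset Γ), d i := hsum'
        _ = α * ∑ i ∈ B r, d i := by rw [Finset.sdiff_empty, Finset.sum_empty, add_zero]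
        _ ≤ α * α ^ j := mul_le_mul_of_nonneg_left hsum hα0
        _ = α ^ (j+1) := by rw [pow_succ]; ring
  -- dependence on the ball only
  have hdepS : ∀ v ∈ S, ∀ u ∈ nbr v, u ∈ B r := by
    intro v hv u hu
    have h1 := hBnbr (r-1) v ((hSmem v).1 hv) u hu
    rwa [hr1] at h1
  have hdep : ∀ j, PottsAux.DepOn q (Gs j) (B r) := by
    intro j
    induction j with
    | zero =>
      intro σ σ' h
      rw [hGs0, hf]
      simp only
      rw [h φ hφU]
    | succ j IH =>
      rw [hGsS]
      exact PottsAux.dep_tauSeq q β Ψ nbr S (Gs j) IH hdepS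
  -- invariance of the finite-volume expectations
  have hinv : ∀ (η' : Γ → Fin (q+1)) (j : ℕ),
      ∑ ζ : {x // x ∈ B r} → Fin (q+1),
          pottsBallWeight q β Ψ nbr (B r) η' ζ * Gs j (PottsAux.glue q (B r) ζ η')
        = ∑ ζ : {x // x ∈ B r} → Fin (q+1),
            pottsBallWeight q β Ψ nbr (B r) η' ζ *
              (if (PottsAux.glue q (B r) ζ η') φ = a then (1:ℝ) else 0) := by
    intro η' j
    induction j with
    | zero => rfl
    | succ j IH =>
      rw [hGsS, PottsAux.sum_tauSeq_invariant q β Ψ nbr hsym hirr (B r) η' S hSU (Gs j), IH]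
  -- positivity of the partition functions
  haveI : Nonempty ({x // x ∈ B r} → Fin (q+1)) := ⟨fun _ => 0⟩
  have hZpos : ∀ η' : Γ → Fin (q+1),
      0 < ∑ ζ : {x // x ∈ B r} → Fin (q+1), pottsBallWeight q β Ψ nbr (B r) η' ζ := by
    intro η'
    refine Finset.sum_pos (fun ζ _ => ?_) Finset.univ_nonempty
    rw [PottsAux.weight_eq]
    exact Real.exp_pos _
  -- the probabilities as expectations of the swept function
  obtain ⟨d, hosc, hd0, hlay, hsum⟩ := main (r-1) le_rfl
  have hprob : ∀ η' : Γ → Fin (q+1), pottsBallProb q β Ψ nbr (B r) φ (hφB r) η' a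
      = ∑ ζ : {x // x ∈ B r} → Fin (q+1),
          (pottsBallWeight q β Ψ nbr (B r) η' ζ /
            (∑ ζ' : {x // x ∈ B r} → Fin (q+1), pottsBallWeight q β Ψ nbr (B r) η' ζ'))
          * Gs (r-1) (PottsAux.glue q (B r) ζ η') := by
    intro η'
    rw [PottsAux.prob_eq q β Ψ nbr (B r) φ (hφB r) η' a, ← hinv η' (r-1), Finset.sum_div]
    exact Finset.sum_congr rfl fun ζ _ => by ring
  -- boundary independence of the swept function on the ball
  have hGc : ∀ (η' : Γ → Fin (q+1)) ζ, Gs (r-1) (PottsAux.glue q (B r) ζ η')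
      = Gs (r-1) (PottsAux.glue q (B r) ζ η) := by
    intro η' ζ
    refine hdep (r-1) _ _ fun x hx => ?_
    unfold PottsAux.glue
    rw [dif_pos hx, dif_pos hx]
  -- conclusion
  have h2 : pottsBallProb q β Ψ nbr (B r) φ (hφB r) ξbd a
      = ∑ ζ : {x // x ∈ B r} → Fin (q+1),
          (pottsBallWeight q β Ψ nbr (B r) ξbd ζ /
            (∑ ζ' : {x // x ∈ B r} → Fin (q+1), pottsBallWeight q β Ψ nbr (B r) ξbd ζ'))
          * Gs (r-1) (PottsAux.glue q (B r) ζ η) := by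
    rw [hprob ξbd]
    exact Finset.sum_congr rfl fun ζ _ => by rw [hGc ξbd ζ]
  rw [hprob η, h2]
  have hMle : ∑ i ∈ B r, d i ≤ α ^ (r-1) := hsum
  refine le_trans (PottsAux.expect_diff _ _ _ (∑ i ∈ B r, d i) ?_ ?_ ?_ ?_ ?_) hMle
  · intro ζ
    refine div_nonneg ?_ (hZpos η).le
    rw [PottsAux.weight_eq]; exact (Real.exp_pos _).le
  · intro ζ
    refine div_nonneg ?_ (hZpos ξbd).le
    rw [PottsAux.weight_eq]; exact (Real.exp_pos _).le
  · rw [← Finset.sum_div, div_self (hZpos η).ne']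
  · rw [← Finset.sum_div, div_self (hZpos ξbd).ne']
  · intro ζ ζ'
    refine PottsAux.osc_diff q hosc (B r) _ _ fun x hx => ?_
    unfold PottsAux.glue
    rw [dif_neg hx, dif_neg hx]
end
end
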